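/- Let C be a d-dimensional copula satisfying: for each p, ∂_p C exists and is continuous on {u ∈ [0,1]^d : u_p ∈ (0,1)}. Let D₀ be the set of continuous functions α on [0,1]^d with α(1,...,1)=0 and α(u)=0 whenever some coordinate of u is 0. Then the map Φ sending a d-variate distribution function H on [0,1]^d (with marginals vanishing at 0) to the function u ↦ H(H₁⁻(u₁),...,H_d⁻(u_d)) is Hadamard-differentiable at C tangentially to D₀, with derivative Φ'_C(α)(u) = α(u) − Σ_{p=1}^d ∂_pC(u)·α(u^{(p)}), where ∂_pC is extended by 0 to {u : u_p ∈ {0,1}} and u^{(p)} = (1,...,1,u_p,1,...,1). -/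

import Mathlib

open MeasureTheory Set Filter Topology

/-- A `d`-dimensional copula. -/
def IsCopula (d : ℕ) (C : (Fin d → ℝ) → ℝ) : Prop :=
  ∃ μ : Measure (Fin d → ℝ), IsProbabilityMeasure μ ∧
    (∀ p : Fin d, ∀ t ∈ Icc (0:ℝ) 1, μ {x | x p ≤ t} = ENNReal.ofReal t) ∧
    (∀ u, C u = (μ {x | ∀ p, x p ≤ u p}).toReal)

/-- The unit cube `[0,1]^d`. -/
def cube (d : ℕ) : Set (Fin d → ℝ) := Set.univ.pi fun _ => Icc 0 1

/-- `x^{(p)}`: all coordinates `1` except the `p`-th, which is `x`. -/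
def margVec {d : ℕ} (p : Fin d) (s : ℝ) : Fin d → ℝ := Function.update (fun _ => 1) p s

lemma mem_cube {d : ℕ} {u : Fin d → ℝ} : u ∈ cube d ↔ ∀ p, u p ∈ Icc (0:ℝ) 1 := by
  constructor
  · intro h p; exact h p (mem_univ p)
  · intro h p _; exact h p

lemma update_mem_cube {d : ℕ} {w : Fin d → ℝ} (hw : w ∈ cube d) (k : Fin d) {s : ℝ}
    (hs : s ∈ Icc (0:ℝ) 1) : Function.update w k s ∈ cube d := by
  rw [mem_cube]
  intro q
  by_cases h : q = k
  · subst h; simpa using hs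
  · rw [Function.update_of_ne h]; exact mem_cube.1 hw q

lemma margVec_mem_cube {d : ℕ} (p : Fin d) {s : ℝ} (hs : s ∈ Icc (0:ℝ) 1) :
    margVec p s ∈ cube d := by
  rw [mem_cube]
  intro q
  by_cases h : q = p
  · subst h; simp [margVec, hs]
  · simp [margVec, Function.update_of_ne h]

lemma margVec_one {d : ℕ} (p : Fin d) : margVec p 1 = fun _ => (1:ℝ) := by
  funext q
  by_cases h : q = p
  · subst h; simp [margVec]
  · simp [margVec, Function.update_of_ne h]

lemma isCompact_cube (d : ℕ) : IsCompact (cube d) :=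
  isCompact_univ_pi fun _ => isCompact_Icc

lemma exists_pos_forall_fin {d : ℕ} (f : Fin d → ℝ) (hf : ∀ p, 0 < f p) :
    ∃ δ > 0, ∀ p, δ ≤ f p := by
  rcases isEmpty_or_nonempty (Fin d) with h | h
  · exact ⟨1, one_pos, fun p => (h.false p).elim⟩
  · refine ⟨Finset.univ.inf' Finset.univ_nonempty f, ?_, fun p => Finset.inf'_le f (Finset.mem_univ p)⟩
    exact (Finset.lt_inf'_iff _).mpr fun p _ => hf p

lemma dist_margVec {d : ℕ} (p : Fin d) (x y : ℝ) :
    dist (margVec p x) (margVec p y) ≤ |x - y| := by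
  rw [dist_pi_le_iff (abs_nonneg _)]
  intro q
  by_cases h : q = p
  · subst h; simp [margVec, Real.dist_eq]
  · simp [margVec, Function.update_of_ne h, dist_self]
section base
variable {d : ℕ} {μ : Measure (Fin d → ℝ)} [IsProbabilityMeasure μ]
  {C : (Fin d → ℝ) → ℝ}
  (hμm : ∀ p : Fin d, ∀ t ∈ Icc (0:ℝ) 1, μ {x | x p ≤ t} = ENNReal.ofReal t)
  (hCd : ∀ u, C u = (μ {x | ∀ p, x p ≤ u p}).toReal)

lemma measSet_le (p : Fin d) (t : ℝ) : MeasurableSet {x : Fin d → ℝ | x p ≤ t} :=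
  measurableSet_le (measurable_pi_apply p) measurable_const

lemma measSet_A (u : Fin d → ℝ) : MeasurableSet {x : Fin d → ℝ | ∀ p, x p ≤ u p} := by
  have : {x : Fin d → ℝ | ∀ p, x p ≤ u p} = ⋂ p, {x | x p ≤ u p} := by
    ext x; simp
  rw [this]
  exact MeasurableSet.iInter fun p => measSet_le p (u p)

include hμm in
lemma mu_gt_one (p : Fin d) : μ {x : Fin d → ℝ | 1 < x p} = 0 := by
  have h1 : {x : Fin d → ℝ | 1 < x p} = {x : Fin d → ℝ | x p ≤ 1}ᶜ := by
    ext x; simp [not_le]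
  rw [h1, measure_compl (measSet_le p 1) (measure_ne_top μ _),
    hμm p 1 (by norm_num)]
  simp

include hμm hCd in
lemma C_marg (p : Fin d) {s : ℝ} (hs : s ∈ Icc (0:ℝ) 1) : C (margVec p s) = s := by
  have hsub : {x : Fin d → ℝ | x p ≤ s} ⊆
      {x : Fin d → ℝ | ∀ q, x q ≤ margVec p s q} ∪ ⋃ q, {x : Fin d → ℝ | 1 < x q} := by
    intro x hx
    by_cases h : ∀ q, x q ≤ 1
    · left
      intro q
      by_cases hq : q = p
      · subst hq; simpa [margVec] using hx
      · simp only [margVec, Function.update_of_ne hq]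
        exact h q
    · right
      push_neg at h
      obtain ⟨q, hq⟩ := h
      exact mem_iUnion.2 ⟨q, hq⟩
  have hsub2 : {x : Fin d → ℝ | ∀ q, x q ≤ margVec p s q} ⊆ {x : Fin d → ℝ | x p ≤ s} := by
    intro x hx
    have := hx p
    simpa [margVec] using this
  have h0 : μ (⋃ q, {x : Fin d → ℝ | 1 < x q}) = 0 := by
    refine measure_iUnion_null fun q => mu_gt_one hμm q
  have hle : μ {x : Fin d → ℝ | x p ≤ s} ≤ μ {x : Fin d → ℝ | ∀ q, x q ≤ margVec p s q} := by
    calc μ {x : Fin d → ℝ | x p ≤ s}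
        ≤ μ ({x : Fin d → ℝ | ∀ q, x q ≤ margVec p s q} ∪ ⋃ q, {x : Fin d → ℝ | 1 < x q}) :=
          measure_mono hsub
      _ ≤ μ {x : Fin d → ℝ | ∀ q, x q ≤ margVec p s q} + μ (⋃ q, {x : Fin d → ℝ | 1 < x q}) :=
          measure_union_le _ _
      _ = μ {x : Fin d → ℝ | ∀ q, x q ≤ margVec p s q} := by rw [h0, add_zero]
  have heq : μ {x : Fin d → ℝ | ∀ q, x q ≤ margVec p s q} = ENNReal.ofReal s := by
    refine le_antisymm ?_ ?_
    · rw [← hμm p s hs]; exact measure_mono hsub2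
    · rw [← hμm p s hs]; exact hle
  rw [hCd, heq, ENNReal.toReal_ofReal hs.1]

include hμm hCd in
lemma C_one' : C (fun _ => 1) = 1 := by
  rcases isEmpty_or_nonempty (Fin d) with h | h
  · rw [hCd]
    have : {x : Fin d → ℝ | ∀ p, x p ≤ (fun _ => (1:ℝ)) p} = univ := by
      ext x; simp
    rw [this]
    simp
  · obtain ⟨p⟩ := h
    have := C_marg hμm hCd p (s := 1) (by norm_num)
    rwa [margVec_one] at this

include hμm hCd in
lemma C_lip_coord (w : Fin d → ℝ) (k : Fin d) {s s' : ℝ}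
    (h0 : 0 ≤ s) (hss : s ≤ s') (h1 : s' ≤ 1) :
    C (Function.update w k s) ≤ C (Function.update w k s') ∧
    C (Function.update w k s') ≤ C (Function.update w k s) + (s' - s) := by
  set A := {x : Fin d → ℝ | ∀ q, x q ≤ Function.update w k s q} with hA
  set A' := {x : Fin d → ℝ | ∀ q, x q ≤ Function.update w k s' q} with hA'
  have hAA : A ⊆ A' := by
    intro x hx q
    by_cases hq : q = k
    · subst hq; simp only [Function.update_self]
      exact le_trans (by simpa [Function.update_self] using hx q) hss
    · simp only [Function.update_of_ne hq]
      simpa [Function.update_of_ne hq] using hx q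
  have hdiff : A' \ A ⊆ {x : Fin d → ℝ | x k ≤ s'} \ {x : Fin d → ℝ | x k ≤ s} := by
    rintro x ⟨hx', hx⟩
    constructor
    · simpa [Function.update_self] using hx' k
    · simp only [mem_setOf_eq]
      intro hk
      exact hx fun q => by
        by_cases hq : q = k
        · subst hq; simpa [Function.update_self] using hk
        · simp only [Function.update_of_ne hq]
          simpa [Function.update_of_ne hq] using hx' q
  have hsub : {x : Fin d → ℝ | x k ≤ s} ⊆ {x : Fin d → ℝ | x k ≤ s'} :=
    fun x hx => le_trans hx hss
  have hslab : μ ({x : Fin d → ℝ | x k ≤ s'} \ {x : Fin d → ℝ | x k ≤ s})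
      = ENNReal.ofReal (s' - s) := by
    have h := measure_diff hsub (measSet_le k s).nullMeasurableSet (measure_ne_top μ _)
    rw [h, hμm k s' ⟨le_trans h0 hss, h1⟩,
      hμm k s ⟨h0, le_trans hss h1⟩, ← ENNReal.ofReal_sub _ h0]
  have hmono : μ A ≤ μ A' := measure_mono hAA
  have hup : μ A' ≤ μ A + ENNReal.ofReal (s' - s) := by
    have h1' : A' ⊆ A ∪ (A' \ A) := by
      intro x hx
      by_cases h : x ∈ A
      · exact Or.inl h
      · exact Or.inr ⟨hx, h⟩
    calc μ A' ≤ μ (A ∪ (A' \ A)) := measure_mono h1'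
      _ ≤ μ A + μ (A' \ A) := measure_union_le _ _
      _ ≤ μ A + ENNReal.ofReal (s' - s) := by
          gcongr
          rw [← hslab]
          exact measure_mono hdiff
  constructor
  · rw [hCd, hCd]
    exact ENNReal.toReal_mono (measure_ne_top μ _) hmono
  · rw [hCd, hCd]
    have := ENNReal.toReal_mono (by finiteness) hup
    rwa [ENNReal.toReal_add (measure_ne_top μ _) ENNReal.ofReal_ne_top,
      ENNReal.toReal_ofReal (by linarith)] at this

include hμm hCd in
lemma D_mem_Icc {u : Fin d → ℝ} (hu : u ∈ cube d) {p : Fin d} (hup : u p ∈ Ioo (0:ℝ) 1)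
    {Dv : ℝ} (hD : HasDerivWithinAt (fun s => C (Function.update u p s)) Dv (Icc (0:ℝ) 1) (u p)) :
    Dv ∈ Icc (0:ℝ) 1 := by
  set x := u p with hx
  have hx0 : (0:ℝ) ≤ x := hup.1.le
  have hx1 : x < 1 := hup.2
  have hslope := hasDerivWithinAt_iff_tendsto_slope.1 hD
  have hne : (𝓝[Ioo x 1] x).NeBot := by
    rw [← mem_closure_iff_nhdsWithin_neBot, closure_Ioo (ne_of_lt hx1)]
    exact ⟨le_refl x, hx1.le⟩
  have hsub : Ioo x 1 ⊆ Icc (0:ℝ) 1 \ {x} := by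
    intro y hy
    exact ⟨⟨le_trans hx0 hy.1.le, hy.2.le⟩, ne_of_gt hy.1⟩
  have htt : Tendsto (slope (fun s => C (Function.update u p s)) x) (𝓝[Ioo x 1] x) (𝓝 Dv) :=
    hslope.mono_left (nhdsWithin_mono x hsub)
  have hev : ∀ᶠ y in 𝓝[Ioo x 1] x,
      slope (fun s => C (Function.update u p s)) x y ∈ Icc (0:ℝ) 1 := by
    filter_upwards [eventually_mem_nhdsWithin] with y hy
    have hlip := C_lip_coord hμm hCd u p hx0 hy.1.le hy.2.le
    have hyx : (0:ℝ) < y - x := sub_pos.2 hy.1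
    rw [slope_def_field]
    constructor
    · apply div_nonneg _ hyx.le
      linarith [hlip.1]
    · rw [div_le_one hyx]
      linarith [hlip.2]
  constructor
  · exact ge_of_tendsto htt (hev.mono fun y hy => hy.1)
  · exact le_of_tendsto htt (hev.mono fun y hy => hy.2)


include hμm hCd in
lemma mvt_coord (k : Fin d) (Dk : (Fin d → ℝ) → ℝ)
    (hDk : ∀ v ∈ cube d, v k ∈ Ioo (0:ℝ) 1 →
      HasDerivWithinAt (fun s => C (Function.update v k s)) (Dk v) (Icc (0:ℝ) 1) (v k))
    {w : Fin d → ℝ} (hw : w ∈ cube d) {a b : ℝ}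
    (ha : a ∈ Ioo (0:ℝ) 1) (hb : b ∈ Ioo (0:ℝ) 1) (hab : a < b) :
    ∃ ξ, ξ ∈ Ioo a b ∧
      C (Function.update w k b) - C (Function.update w k a)
        = Dk (Function.update w k ξ) * (b - a) := by
  set φ : ℝ → ℝ := fun s => C (Function.update w k s) with hφ
  have hcont : ContinuousOn φ (Icc a b) := by
    have hlip : LipschitzOnWith 1 φ (Icc (0:ℝ) 1) := by
      rw [lipschitzOnWith_iff_dist_le_mul]
      intro x hx y hy
      rw [NNReal.coe_one, one_mul, Real.dist_eq, Real.dist_eq]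
      show |C (Function.update w k x) - C (Function.update w k y)| ≤ |x - y|
      rcases le_total x y with h | h
      · have h2 := C_lip_coord hμm hCd w k hx.1 h hy.2
        rw [abs_sub_comm (C (Function.update w k x)),
          abs_of_nonneg (by linarith [h2.1]), abs_sub_comm x, abs_of_nonneg (by linarith)]
        linarith [h2.2]
      · have h2 := C_lip_coord hμm hCd w k hy.1 h hx.2
        rw [abs_of_nonneg (by linarith [h2.1]), abs_of_nonneg (by linarith)]
        linarith [h2.2]
    exact hlip.continuousOn.mono (Icc_subset_Icc ha.1.le hb.2.le)
  have hderiv : ∀ s ∈ Ioo a b, HasDerivAt φ (Dk (Function.update w k s)) s := by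
    intro s hs
    have hs01 : s ∈ Ioo (0:ℝ) 1 := ⟨lt_trans ha.1 hs.1, lt_trans hs.2 hb.2⟩
    have hv : Function.update w k s ∈ cube d := update_mem_cube hw k ⟨hs01.1.le, hs01.2.le⟩
    have h := hDk _ hv (by rw [Function.update_self]; exact hs01)
    rw [Function.update_self] at h
    have h2 : HasDerivWithinAt φ (Dk (Function.update w k s)) (Icc (0:ℝ) 1) s := by
      have heq : (fun s' => C (Function.update (Function.update w k s) k s')) = φ := by
        funext s'
        rw [Function.update_idem]
      rwa [heq] at h
    exact h2.hasDerivAt (Icc_mem_nhds hs01.1 hs01.2)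
  obtain ⟨ξ, hξ, hslope⟩ :=
    exists_hasDerivAt_eq_slope φ (fun s => Dk (Function.update w k s)) hab hcont hderiv
  refine ⟨ξ, hξ, ?_⟩
  rw [hslope]
  show φ b - φ a = (φ b - φ a) / (b - a) * (b - a)
  rw [div_mul_cancel₀]
  exact sub_ne_zero.2 (ne_of_gt hab)

end base

lemma invS_est (r K σ η : ℝ) (hr : r ≠ 0) (β γ : ℝ → ℝ)
    (hβK : ∀ x ∈ Icc (0:ℝ) 1, |β x| ≤ K) (hβ1 : β 1 = 0)
    (hβγ : ∀ x ∈ Icc (0:ℝ) 1, |β x - γ x| ≤ σ)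
    (hγuc : ∀ x ∈ Icc (0:ℝ) 1, ∀ y ∈ Icc (0:ℝ) 1, |x - y| ≤ η → |γ x - γ y| ≤ σ)
    (hK : 1 ≤ K) (hσ0 : 0 ≤ σ) (hσ1 : σ ≤ 1) (hrη : 8 * |r| * K ≤ η)
    {q : ℝ} (hq : q ∈ Ioc (0:ℝ) 1) :
    sInf {x ∈ Icc (0:ℝ) 1 | q ≤ x + r * β x} ∈ Icc (0:ℝ) 1 ∧
    |sInf {x ∈ Icc (0:ℝ) 1 | q ≤ x + r * β x} - q| ≤ |r| * (|γ q| + 2 * σ) ∧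
    (q - r * γ q + 2 * |r| * σ ∈ Icc (0:ℝ) 1 →
      |sInf {x ∈ Icc (0:ℝ) 1 | q ≤ x + r * β x} - (q - r * γ q)| ≤ 2 * |r| * σ) := by
  set S := {x ∈ Icc (0:ℝ) 1 | q ≤ x + r * β x} with hS
  have hr0 : 0 ≤ |r| := abs_nonneg r
  have hrpos : 0 < |r| := abs_pos.2 hr
  have hKpos : (0:ℝ) < K := lt_of_lt_of_le one_pos hK
  have hq1 : q ∈ Icc (0:ℝ) 1 := ⟨hq.1.le, hq.2⟩
  have h1S : (1:ℝ) ∈ S := by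
    refine ⟨⟨zero_le_one, le_refl 1⟩, ?_⟩
    rw [hβ1]; simpa using hq.2
  have hne : S.Nonempty := ⟨1, h1S⟩
  have hbdd : BddBelow S := ⟨0, fun x hx => hx.1.1⟩
  have hγK : |γ q| ≤ K + 1 := by
    have h1 := hβγ q hq1
    have h2 := hβK q hq1
    have h3 : |γ q| - |β q| ≤ |γ q - β q| := abs_sub_abs_le_abs_sub (γ q) (β q)
    rw [abs_sub_comm (γ q)] at h3
    linarith
  have hmemIcc : sInf S ∈ Icc (0:ℝ) 1 :=
    ⟨le_csInf hne fun x hx => hx.1.1, csInf_le hbdd h1S⟩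
  -- key estimate on r * β x vs r * γ q
  have key : ∀ x ∈ Icc (0:ℝ) 1, |x - q| ≤ η → |r * β x - r * γ q| ≤ 2 * |r| * σ := by
    intro x hx hxq
    have h1 := hβγ x hx
    have h2 := hγuc x hx q hq1 hxq
    calc |r * β x - r * γ q| = |r| * |β x - γ q| := by rw [← abs_mul, mul_sub]
      _ ≤ |r| * (|β x - γ x| + |γ x - γ q|) := by
          apply mul_le_mul_of_nonneg_left _ hr0
          calc |β x - γ q| = |(β x - γ x) + (γ x - γ q)| := by ring_nf
            _ ≤ |β x - γ x| + |γ x - γ q| := abs_add_le _ _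
      _ ≤ |r| * (σ + σ) := by apply mul_le_mul_of_nonneg_left (by linarith) hr0
      _ = 2 * |r| * σ := by ring
  -- elements of S are ≥ q - |r| K
  have hlow_elt : ∀ x ∈ S, q - |r| * K ≤ x := by
    intro x hx
    have hb := hβK x hx.1
    have h2 : q ≤ x + r * β x := hx.2
    have habs : r * β x ≤ |r| * K := by
      calc r * β x ≤ |r * β x| := le_abs_self _
        _ = |r| * |β x| := abs_mul r (β x)
        _ ≤ |r| * K := mul_le_mul_of_nonneg_left hb hr0
    linarith
  have hlowInf : q - |r| * K ≤ sInf S := le_csInf hne hlow_elt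
  -- crude upper bound
  have hupcrude : sInf S ≤ q + |r| * (|γ q| + 2 * σ) := by
    rcases le_or_gt 1 (q + |r| * (|γ q| + 2 * σ)) with h | h
    · exact le_trans hmemIcc.2 h
    · set x₁ := q + |r| * (|γ q| + 2 * σ) with hx₁
      have hx₁m : x₁ ∈ Icc (0:ℝ) 1 := by
        constructor
        · have : 0 ≤ |r| * (|γ q| + 2 * σ) := by positivity
          linarith [hq.1]
        · exact h.le
      have hdist : |x₁ - q| ≤ η := by
        have h1 : |x₁ - q| = |r| * (|γ q| + 2 * σ) := by
          rw [hx₁]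
          have h0 : (0:ℝ) ≤ |r| * (|γ q| + 2 * σ) := by positivity
          rw [show q + |r| * (|γ q| + 2 * σ) - q = |r| * (|γ q| + 2 * σ) by ring,
            abs_of_nonneg h0]
        rw [h1]
        calc |r| * (|γ q| + 2 * σ) ≤ |r| * ((K+1) + 2) := by
              apply mul_le_mul_of_nonneg_left (by linarith) hr0
          _ ≤ 8 * |r| * K := by nlinarith
          _ ≤ η := hrη
      have hkey := key x₁ hx₁m hdist
      have hγq : |r * γ q| ≤ |r| * |γ q| := le_of_eq (abs_mul r (γ q))
      have hmem : x₁ ∈ S := by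
        refine ⟨hx₁m, ?_⟩
        have h2 : r * β x₁ ≥ r * γ q - 2 * |r| * σ := by
          have := (abs_le.1 hkey).1; linarith
        have h3 : r * γ q ≥ -(|r| * |γ q|) := by
          have := neg_abs_le (r * γ q); rw [abs_mul] at this; linarith
        have : x₁ + r * β x₁ ≥ q + |r| * (|γ q| + 2 * σ) + (r * γ q - 2 * |r| * σ) := by
          rw [hx₁]; linarith
        linarith
      exact csInf_le hbdd hmem
  -- refined lower bound
  have hlowref : q - r * γ q - 2 * |r| * σ ≤ sInf S := by
    apply le_of_forall_pos_le_add
    intro ε hε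
    set ε' := min ε (|r| * K) with hε'
    have hε'pos : 0 < ε' := lt_min hε (mul_pos hrpos hKpos)
    have hlt : sInf S < sInf S + ε' := by linarith
    obtain ⟨x, hxS, hxlt⟩ := (csInf_lt_iff hbdd hne).1 hlt
    have hxup : x ≤ q + 6 * |r| * K := by
      have h1 : sInf S ≤ q + |r| * (|γ q| + 2 * σ) := hupcrude
      have h2 : |r| * (|γ q| + 2 * σ) ≤ 4 * |r| * K := by nlinarith
      have h3 : ε' ≤ |r| * K := min_le_right _ _
      nlinarith [hxlt.le]
    have hxlow : q - |r| * K ≤ x := hlow_elt x hxS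
    have hdist : |x - q| ≤ η := by
      rw [abs_le]
      constructor
      · nlinarith
      · nlinarith
    have hkey := key x hxS.1 hdist
    have h2 : r * β x ≤ r * γ q + 2 * |r| * σ := by
      have := (abs_le.1 hkey).2; linarith
    have h3 : q ≤ x + r * β x := hxS.2
    have h4 : q - r * γ q - 2 * |r| * σ ≤ x := by linarith
    have h5 : x ≤ sInf S + ε := lt_of_lt_of_le hxlt (by
      have := min_le_left ε (|r| * K); linarith) |>.le
    linarith
  refine ⟨hmemIcc, ?_, ?_⟩
  · rw [abs_le]
    constructor
    · have h3 : r * γ q ≤ |r| * |γ q| := by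
        have := le_abs_self (r * γ q); rw [abs_mul] at this; linarith
      nlinarith
    · linarith
  · intro hx₀
    set x₀ := q - r * γ q + 2 * |r| * σ with hx₀def
    have hdist : |x₀ - q| ≤ η := by
      have h1 : |x₀ - q| ≤ |r| * |γ q| + 2 * |r| * σ := by
        rw [hx₀def]
        calc |q - r * γ q + 2 * |r| * σ - q| = |(- (r * γ q)) + 2 * |r| * σ| := by ring_nf
          _ ≤ |(- (r * γ q))| + |2 * |r| * σ| := abs_add_le _ _
          _ = |r| * |γ q| + 2 * |r| * σ := by
              rw [abs_neg, abs_mul, abs_of_nonneg (by positivity : (0:ℝ) ≤ 2 * |r| * σ)]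
      calc |x₀ - q| ≤ |r| * |γ q| + 2 * |r| * σ := h1
        _ ≤ |r| * (K + 1) + 2 * |r| * 1 := by
            have := mul_le_mul_of_nonneg_left hγK hr0
            nlinarith
        _ ≤ 8 * |r| * K := by nlinarith
        _ ≤ η := hrη
    have hkey := key x₀ hx₀ hdist
    have hmem : x₀ ∈ S := by
      refine ⟨hx₀, ?_⟩
      have h2 : r * β x₀ ≥ r * γ q - 2 * |r| * σ := by
        have := (abs_le.1 hkey).1; linarith
      rw [hx₀def]; linarith
    have hup : sInf S ≤ x₀ := csInf_le hbdd hmem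
    rw [abs_le]
    constructor <;> [linarith; linarith]

lemma invT_est (r K σ η : ℝ) (hr : r ≠ 0) (β γ : ℝ → ℝ)
    (hβK : ∀ x ∈ Icc (0:ℝ) 1, |β x| ≤ K) (hβ0 : β 0 = 0)
    (hβγ : ∀ x ∈ Icc (0:ℝ) 1, |β x - γ x| ≤ σ)
    (hγuc : ∀ x ∈ Icc (0:ℝ) 1, ∀ y ∈ Icc (0:ℝ) 1, |x - y| ≤ η → |γ x - γ y| ≤ σ)
    (hK : 1 ≤ K) (hσ0 : 0 ≤ σ) (hrη : 8 * |r| * K ≤ η) :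
    sSup {x ∈ Icc (0:ℝ) 1 | x + r * β x = 0} ∈ Icc (0:ℝ) 1 ∧
    |sSup {x ∈ Icc (0:ℝ) 1 | x + r * β x = 0} - 0| ≤ |r| * (|γ 0| + 2 * σ) := by
  set T := {x ∈ Icc (0:ℝ) 1 | x + r * β x = 0} with hT
  have hr0 : 0 ≤ |r| := abs_nonneg r
  have hrpos : 0 < |r| := abs_pos.2 hr
  have hKpos : (0:ℝ) < K := lt_of_lt_of_le one_pos hK
  have h0T : (0:ℝ) ∈ T := by
    refine ⟨⟨le_refl 0, zero_le_one⟩, ?_⟩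
    rw [hβ0]; ring
  have hne : T.Nonempty := ⟨0, h0T⟩
  have hbddA : BddAbove T := ⟨1, fun x hx => hx.1.2⟩
  have h01 : (0:ℝ) ∈ Icc (0:ℝ) 1 := ⟨le_refl 0, zero_le_one⟩
  have helt : ∀ x ∈ T, x ≤ |r| * (|γ 0| + 2 * σ) := by
    intro x hx
    have hxe : x = -(r * β x) := by linarith [hx.2]
    have hb := hβK x hx.1
    have hxabs : |x| ≤ |r| * K := by
      conv_lhs => rw [hxe]
      rw [abs_neg, abs_mul]
      exact mul_le_mul_of_nonneg_left hb hr0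
    have hdist : |x - 0| ≤ η := by
      calc |x - 0| = |x| := by rw [sub_zero]
        _ ≤ |r| * K := hxabs
        _ ≤ 8 * |r| * K := by nlinarith
        _ ≤ η := hrη
    have h1 := hβγ x hx.1
    have h2 := hγuc x hx.1 0 h01 hdist
    have h3 : |β x| ≤ |γ 0| + 2 * σ := by
      calc |β x| = |(β x - γ x) + (γ x - γ 0) + γ 0| := by
            congr 1; ring
        _ ≤ |(β x - γ x) + (γ x - γ 0)| + |γ 0| := abs_add_le _ _
        _ ≤ |β x - γ x| + |γ x - γ 0| + |γ 0| := by linarith [abs_add_le (β x - γ x) (γ x - γ 0)]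
        _ ≤ |γ 0| + 2 * σ := by linarith
    have hxval : |x| = |r| * |β x| := by
      conv_lhs => rw [hxe]
      rw [abs_neg, abs_mul]
    calc x ≤ |x| := le_abs_self x
      _ = |r| * |β x| := hxval
      _ ≤ |r| * (|γ 0| + 2 * σ) := mul_le_mul_of_nonneg_left h3 hr0
  have hsup_le : sSup T ≤ |r| * (|γ 0| + 2 * σ) := csSup_le hne helt
  have hsup0 : 0 ≤ sSup T := le_csSup hbddA h0T
  refine ⟨⟨hsup0, csSup_le hne fun x hx => hx.1.2⟩, ?_⟩
  rw [sub_zero, abs_of_nonneg hsup0]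
  exact hsup_le

set_option maxHeartbeats 2000000 in
/-- Theorem: Hadamard differentiability of `Φ : H ↦ H(H₁⁻,…,H_d⁻)`.
Under Segers' condition, for any sequences `tₙ → 0` (`tₙ ≠ 0`) and bounded `αₙ` with
`αₙ → α ∈ D₀` uniformly and `Hₙ = C + tₙαₙ` a distribution function on `[0,1]^d` with
marginals vanishing at `0`, one has
`‖(Φ(C + tₙαₙ) − Φ(C))/tₙ − (α − Σ_p ∂_pC·α(·^{(p)}))‖_∞ → 0`. -/
theorem Phi_hadamard_differentiable_at_copula
    (d : ℕ) (C : (Fin d → ℝ) → ℝ) (hC : IsCopula d C)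
    (D : Fin d → (Fin d → ℝ) → ℝ)
    (hDderiv : ∀ p : Fin d, ∀ u ∈ cube d, u p ∈ Ioo (0:ℝ) 1 →
      HasDerivWithinAt (fun s => C (Function.update u p s)) (D p u) (Icc (0:ℝ) 1) (u p))
    (hDcont : ∀ p : Fin d, ContinuousOn (D p) {u | u ∈ cube d ∧ u p ∈ Ioo (0:ℝ) 1})
    (hDbdry : ∀ p : Fin d, ∀ u, (u p = 0 ∨ u p = 1) → D p u = 0)
    (t : ℕ → ℝ) (ht0 : ∀ n, t n ≠ 0) (htt : Tendsto t atTop (nhds 0))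
    (α : (Fin d → ℝ) → ℝ) (αn : ℕ → (Fin d → ℝ) → ℝ)
    (hbdd : ∀ n, ∃ M, ∀ u ∈ cube d, |αn n u| ≤ M)
    (hunif : TendstoUniformlyOn αn α atTop (cube d))
    (hαcont : ContinuousOn α (cube d))
    (hα1 : α (fun _ => 1) = 0)
    (hα0 : ∀ u, (∃ p, u p = 0) → α u = 0)
    -- `Hₙ = C + tₙαₙ` is a distribution function on `[0,1]^d` with marginals vanishing at 0:
    (hdom : ∀ n, ∃ ν : Measure (Fin d → ℝ), IsProbabilityMeasure ν ∧
      (∀ p : Fin d, ν {x | x p ≤ 0} = 0 ∧ ν {x | 1 < x p} = 0) ∧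
      (∀ u ∈ cube d, C u + t n * αn n u = (ν {x | ∀ p, x p ≤ u p}).toReal))
    -- generalized inverses of the marginals of `Hₙ`:
    (Finv : ℕ → Fin d → ℝ → ℝ)
    (hFinv : ∀ n (p : Fin d), ∀ q ∈ Ioc (0:ℝ) 1,
      Finv n p q = sInf {x ∈ Icc (0:ℝ) 1 |
        q ≤ C (margVec p x) + t n * αn n (margVec p x)})
    (hFinv0 : ∀ n (p : Fin d), Finv n p 0 = sSup {x ∈ Icc (0:ℝ) 1 |
        C (margVec p x) + t n * αn n (margVec p x) = 0}) :
    Tendsto (fun n => ⨆ u : cube d,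
      |((C (fun p => Finv n p (u.1 p)) + t n * αn n (fun p => Finv n p (u.1 p))) - C u.1) / t n
        - (α u.1 - ∑ p, D p u.1 * α (margVec p (u.1 p)))|) atTop (nhds 0) := by
  obtain ⟨μ, hμprob, hμm, hCd⟩ := hC
  haveI : Nonempty ↥(cube d) :=
    ⟨⟨fun _ => 0, mem_cube.2 fun p => ⟨le_refl 0, zero_le_one⟩⟩⟩
  obtain ⟨A₀, hA₀⟩ : ∃ A₀, ∀ x ∈ cube d, |α x| ≤ A₀ := by
    obtain ⟨A₀, h⟩ := (isCompact_cube d).exists_bound_of_continuousOn hαcont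
    exact ⟨A₀, fun x hx => by simpa [Real.norm_eq_abs] using h x hx⟩
  set K : ℝ := max A₀ 0 + 1 with hKdef
  have hK1 : (1:ℝ) ≤ K := by
    have := le_max_right A₀ 0; rw [hKdef]; linarith
  have hKα : ∀ x ∈ cube d, |α x| ≤ K - 1 := by
    intro x hx
    have h1 := hA₀ x hx
    have h2 := le_max_left A₀ 0
    rw [hKdef]; linarith
  have hKpos : (0:ℝ) < K := lt_of_lt_of_le one_pos hK1
  rw [NormedAddCommGroup.tendsto_nhds_zero]
  intro ε hε
  set σ : ℝ := min 1 (ε / (2 * (d+1) * (K+5))) with hσdef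
  have hσpos : 0 < σ := lt_min one_pos (by positivity)
  have hσ1 : σ ≤ 1 := min_le_left _ _
  have hσε : ((d:ℝ)+1) * (K+5) * σ ≤ ε / 2 := by
    have h2 : σ ≤ ε / (2 * (d+1) * (K+5)) := min_le_right _ _
    have hpos : (0:ℝ) < ((d:ℝ)+1) * (K+5) := by positivity
    calc ((d:ℝ)+1) * (K+5) * σ ≤ ((d:ℝ)+1) * (K+5) * (ε / (2 * (d+1) * (K+5))) :=
          mul_le_mul_of_nonneg_left h2 hpos.le
      _ = ε / 2 := by field_simp
  obtain ⟨η₁, hη₁pos, hη₁⟩ : ∃ η > 0, ∀ x ∈ cube d, ∀ y ∈ cube d,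
      dist x y ≤ η → |α x - α y| ≤ σ := by
    have huc := (isCompact_cube d).uniformContinuousOn_of_continuous hαcont
    rw [Metric.uniformContinuousOn_iff] at huc
    obtain ⟨δ, hδpos, hδ⟩ := huc σ hσpos
    refine ⟨δ/2, by linarith, fun x hx y hy hxy => ?_⟩
    have := hδ x hx y hy (lt_of_le_of_lt hxy (by linarith))
    rw [Real.dist_eq] at this
    exact this.le
  set ρ : ℝ := min η₁ (1/4) with hρdef
  have hρpos : 0 < ρ := lt_min hη₁pos (by norm_num)
  have hρ4 : ρ ≤ 1/4 := min_le_right _ _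
  have hρη : ρ ≤ η₁ := min_le_left _ _
  obtain ⟨η₂, hη₂pos, hη₂⟩ : ∃ η > 0, ∀ p : Fin d,
      ∀ x ∈ cube d ∩ {v | v p ∈ Icc (ρ/2) (1 - ρ/2)},
      ∀ y ∈ cube d ∩ {v | v p ∈ Icc (ρ/2) (1 - ρ/2)},
      dist x y ≤ η → |D p x - D p y| ≤ σ := by
    have hone : ∀ p : Fin d, ∃ η > 0, ∀ x ∈ cube d ∩ {v | v p ∈ Icc (ρ/2) (1 - ρ/2)},
        ∀ y ∈ cube d ∩ {v | v p ∈ Icc (ρ/2) (1 - ρ/2)},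
        dist x y ≤ η → |D p x - D p y| ≤ σ := by
      intro p
      have hcomp : IsCompact (cube d ∩ {v | v p ∈ Icc (ρ/2) (1 - ρ/2)}) :=
        (isCompact_cube d).inter_right (isClosed_Icc.preimage (continuous_apply p))
      have hsub : cube d ∩ {v | v p ∈ Icc (ρ/2) (1 - ρ/2)} ⊆
          {u | u ∈ cube d ∧ u p ∈ Ioo (0:ℝ) 1} := by
        rintro x ⟨hx1, hx2⟩
        exact ⟨hx1, ⟨lt_of_lt_of_le (by linarith) hx2.1, lt_of_le_of_lt hx2.2 (by linarith)⟩⟩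
      have huc := hcomp.uniformContinuousOn_of_continuous ((hDcont p).mono hsub)
      rw [Metric.uniformContinuousOn_iff] at huc
      obtain ⟨δ, hδpos, hδ⟩ := huc σ hσpos
      refine ⟨δ/2, by linarith, fun x hx y hy hxy => ?_⟩
      have := hδ x hx y hy (lt_of_le_of_lt hxy (by linarith))
      rw [Real.dist_eq] at this
      exact this.le
    choose η hηpos hη using hone
    obtain ⟨η₂, hη₂pos, hmin⟩ := exists_pos_forall_fin η hηpos
    exact ⟨η₂, hη₂pos, fun p x hx y hy hxy => hη p x hx y hy (le_trans hxy (hmin p))⟩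
  set τ : ℝ := min η₁ (min η₂ ρ) / (16 * K) with hτdef
  have hminpos : 0 < min η₁ (min η₂ ρ) := lt_min hη₁pos (lt_min hη₂pos hρpos)
  have hτpos : 0 < τ := by
    rw [hτdef]; positivity
  have hE1 : ∀ᶠ n in atTop, ∀ x ∈ cube d, dist (α x) (αn n x) < σ :=
    Metric.tendstoUniformlyOn_iff.1 hunif σ hσpos
  have hE2 : ∀ᶠ n in atTop, |t n| < τ := by
    have h := htt.abs
    rw [abs_zero] at h
    exact h.eventually_lt_const hτpos
  filter_upwards [hE1, hE2] with n hn1 hn2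
  set r := t n with hrdef
  have hr : r ≠ 0 := ht0 n
  have hrpos : 0 < |r| := abs_pos.2 hr
  have hrK0 : 0 ≤ |r| * K := mul_nonneg (abs_nonneg r) hKpos.le
  have h16 : 16 * |r| * K ≤ min η₁ (min η₂ ρ) := by
    have h16K : (0:ℝ) < 16 * K := by positivity
    have hrτ : |r| ≤ τ := hn2.le
    calc 16 * |r| * K = |r| * (16 * K) := by ring
      _ ≤ τ * (16 * K) := mul_le_mul_of_nonneg_right hrτ h16K.le
      _ = min η₁ (min η₂ ρ) := by rw [hτdef, div_mul_cancel₀ _ (ne_of_gt h16K)]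
  have h16a : 16 * |r| * K ≤ η₁ := le_trans h16 (min_le_left _ _)
  have h16b : 16 * |r| * K ≤ η₂ := le_trans h16 (le_trans (min_le_right _ _) (min_le_left _ _))
  have h16c : 16 * |r| * K ≤ ρ := le_trans h16 (le_trans (min_le_right _ _) (min_le_right _ _))
  have h8a : 8 * |r| * K ≤ η₁ := by nlinarith
  have h4a : 4 * |r| * K ≤ η₁ := by nlinarith
  have h4b : 4 * |r| * K ≤ η₂ := by nlinarith
  have h4c : 4 * |r| * K ≤ ρ / 4 := by nlinarith
  -- facts from the distribution-function structure of Hₙ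
  obtain ⟨ν, hνprob, hνbd, hνeq⟩ := hdom n
  have h1cube : (fun _ => (1:ℝ)) ∈ cube d := mem_cube.2 fun p => ⟨zero_le_one, le_refl 1⟩
  have hαn1 : αn n (fun _ => 1) = 0 := by
    have heq := hνeq _ h1cube
    have hcompl : {x : Fin d → ℝ | ∀ p, x p ≤ (fun _ => (1:ℝ)) p}ᶜ ⊆
        ⋃ p, {x : Fin d → ℝ | 1 < x p} := by
      intro x hx
      simp only [mem_compl_iff, mem_setOf_eq, not_forall, not_le] at hx
      obtain ⟨p, hp⟩ := hx
      exact mem_iUnion.2 ⟨p, hp⟩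
    have h0 : ν {x : Fin d → ℝ | ∀ p, x p ≤ (fun _ => (1:ℝ)) p}ᶜ = 0 :=
      measure_mono_null hcompl (measure_iUnion_null fun p => (hνbd p).2)
    have hν1 : ν {x : Fin d → ℝ | ∀ p, x p ≤ (fun _ => (1:ℝ)) p} = 1 := by
      have hparts := measure_add_measure_compl (μ := ν) (measSet_A (fun _ => (1:ℝ)))
      rw [h0, add_zero] at hparts
      rw [hparts]
      exact measure_univ
    rw [hν1] at heq
    have hC1 : C (fun _ => 1) = 1 := C_one' hμm hCd
    rw [ENNReal.toReal_one, hC1] at heq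
    have hmul : r * αn n (fun _ => 1) = 0 := by linarith
    rcases mul_eq_zero.1 hmul with h | h
    · exact absurd h hr
    · exact h
  have hαn0 : ∀ p, αn n (margVec p 0) = 0 := by
    intro p
    have hm : margVec p 0 ∈ cube d := margVec_mem_cube p ⟨le_refl 0, zero_le_one⟩
    have heq := hνeq _ hm
    have hsub : {x : Fin d → ℝ | ∀ q, x q ≤ margVec p 0 q} ⊆ {x | x p ≤ 0} := by
      intro x hx
      have := hx p
      simpa [margVec] using this
    have h0 : ν {x : Fin d → ℝ | ∀ q, x q ≤ margVec p 0 q} = 0 :=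
      measure_mono_null hsub (hνbd p).1
    rw [h0] at heq
    have hC0 : C (margVec p 0) = 0 := C_marg hμm hCd p ⟨le_refl 0, zero_le_one⟩
    rw [ENNReal.toReal_zero, hC0] at heq
    have hmul : r * αn n (margVec p 0) = 0 := by linarith
    rcases mul_eq_zero.1 hmul with h | h
    · exact absurd h hr
    · exact h
  have hβK : ∀ x ∈ cube d, |αn n x| ≤ K := by
    intro x hx
    have h1 := (hn1 x hx).le
    rw [Real.dist_eq] at h1
    have h2 := hKα x hx
    have h3 : |αn n x| ≤ |α x| + |α x - αn n x| := by
      calc |αn n x| = |α x - (α x - αn n x)| := by ring_nf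
        _ ≤ |α x| + |α x - αn n x| := abs_sub _ _
    linarith
  -- main uniform bound
  have hmain : ∀ uu : ↥(cube d),
      |((C (fun p => Finv n p (uu.1 p)) + t n * αn n (fun p => Finv n p (uu.1 p))) - C uu.1) / t n
        - (α uu.1 - ∑ p, D p uu.1 * α (margVec p (uu.1 p)))| ≤ ε / 2 := by
    rintro ⟨u, hu⟩
    have hu' : ∀ p, u p ∈ Icc (0:ℝ) 1 := mem_cube.1 hu
    set v : Fin d → ℝ := fun p => Finv n p (u p) with hvdef
    -- facts about the generalized inverses
    have hfacts : ∀ p : Fin d, (v p ∈ Icc (0:ℝ) 1) ∧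
        (|v p - u p| ≤ |r| * (|α (margVec p (u p))| + 2 * σ)) ∧
        (u p ∈ Icc ρ (1-ρ) → |v p - (u p - r * α (margVec p (u p)))| ≤ 2 * |r| * σ) := by
      intro p
      have hβK' : ∀ x ∈ Icc (0:ℝ) 1, |(fun x => αn n (margVec p x)) x| ≤ K :=
        fun x hx => hβK _ (margVec_mem_cube p hx)
      have hβ1 : (fun x => αn n (margVec p x)) 1 = 0 := by
        simp only [margVec_one]
        exact hαn1
      have hβ0 : (fun x => αn n (margVec p x)) 0 = 0 := hαn0 p
      have hβγ' : ∀ x ∈ Icc (0:ℝ) 1,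
          |(fun x => αn n (margVec p x)) x - (fun x => α (margVec p x)) x| ≤ σ := by
        intro x hx
        have h1 := (hn1 _ (margVec_mem_cube p hx)).le
        rw [Real.dist_eq] at h1
        simpa [abs_sub_comm] using h1
      have hγuc' : ∀ x ∈ Icc (0:ℝ) 1, ∀ y ∈ Icc (0:ℝ) 1, |x - y| ≤ η₁ →
          |(fun x => α (margVec p x)) x - (fun x => α (margVec p x)) y| ≤ σ := by
        intro x hx y hy hxy
        exact hη₁ _ (margVec_mem_cube p hx) _ (margVec_mem_cube p hy)
          (le_trans (dist_margVec p x y) hxy)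
      rcases eq_or_lt_of_le (hu' p).1 with hq0 | hq0
      · -- u p = 0
        have hset : {x ∈ Icc (0:ℝ) 1 |
            C (margVec p x) + t n * αn n (margVec p x) = 0} =
            {x ∈ Icc (0:ℝ) 1 | x + r * (fun x => αn n (margVec p x)) x = 0} := by
          ext x
          simp only [mem_setOf_eq]
          constructor
          · rintro ⟨h1, h2⟩
            exact ⟨h1, by rw [C_marg hμm hCd p h1] at h2; exact h2⟩
          · rintro ⟨h1, h2⟩
            exact ⟨h1, by rw [C_marg hμm hCd p h1]; exact h2⟩
        have hvp : v p = sSup {x ∈ Icc (0:ℝ) 1 |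
            x + r * (fun x => αn n (margVec p x)) x = 0} := by
          show Finv n p (u p) = _
          rw [← hq0, hFinv0 n p, hset]
        obtain ⟨hm, hb⟩ := invT_est r K σ η₁ hr (fun x => αn n (margVec p x))
          (fun x => α (margVec p x)) hβK' hβ0 hβγ' hγuc' hK1 hσpos.le h8a
        rw [← hvp] at hm hb
        refine ⟨hm, ?_, ?_⟩
        · rw [← hq0]
          exact hb
        · intro hin
          exfalso
          rw [← hq0] at hin
          linarith [hin.1]
      · -- 0 < u p
        have hset : {x ∈ Icc (0:ℝ) 1 |
            u p ≤ C (margVec p x) + t n * αn n (margVec p x)} =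
            {x ∈ Icc (0:ℝ) 1 | u p ≤ x + r * (fun x => αn n (margVec p x)) x} := by
          ext x
          simp only [mem_setOf_eq]
          constructor
          · rintro ⟨h1, h2⟩
            exact ⟨h1, by rw [C_marg hμm hCd p h1] at h2; exact h2⟩
          · rintro ⟨h1, h2⟩
            exact ⟨h1, by rw [C_marg hμm hCd p h1]; exact h2⟩
        have hvp : v p = sInf {x ∈ Icc (0:ℝ) 1 |
            u p ≤ x + r * (fun x => αn n (margVec p x)) x} := by
          show Finv n p (u p) = _
          rw [hFinv n p (u p) ⟨hq0, (hu' p).2⟩, hset]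
        obtain ⟨hm, hb, href⟩ := invS_est r K σ η₁ hr (fun x => αn n (margVec p x))
          (fun x => α (margVec p x)) hβK' hβ1 hβγ' hγuc' hK1 hσpos.le hσ1 h8a ⟨hq0, (hu' p).2⟩
        rw [← hvp] at hm hb href
        refine ⟨hm, hb, fun hin => href ?_⟩
        have hγb : |α (margVec p (u p))| ≤ K - 1 := hKα _ (margVec_mem_cube p (hu' p))
        have hshift : |(- (r * α (margVec p (u p)))) + 2 * |r| * σ| ≤ 4 * |r| * K := by
          have h1 : |(- (r * α (margVec p (u p)))) + 2 * |r| * σ|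
              ≤ |r| * |α (margVec p (u p))| + 2 * |r| * σ := by
            calc |(- (r * α (margVec p (u p)))) + 2 * |r| * σ|
                ≤ |(- (r * α (margVec p (u p))))| + |2 * |r| * σ| := abs_add_le _ _
              _ = |r| * |α (margVec p (u p))| + 2 * |r| * σ := by
                  rw [abs_neg, abs_mul, abs_of_nonneg (by positivity : (0:ℝ) ≤ 2 * |r| * σ)]
          have h2 : |r| * |α (margVec p (u p))| ≤ |r| * (K-1) :=
            mul_le_mul_of_nonneg_left hγb (abs_nonneg r)
          have h3 : 2 * |r| * σ ≤ 2 * |r| := by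
            have := mul_le_mul_of_nonneg_left hσ1 (by positivity : (0:ℝ) ≤ 2 * |r|)
            linarith
          have h4 : |r| * (K+1) ≤ |r| * (4*K) :=
            mul_le_mul_of_nonneg_left (by linarith) (abs_nonneg r)
          have h5 : |r| * (K-1) + 2 * |r| = |r| * (K+1) := by ring
          have h6 : |r| * (4*K) = 4 * |r| * K := by ring
          linarith
        have habs := abs_le.1 hshift
        constructor
        · linarith [habs.1, h4c, hin.1, hρpos]
        · linarith [habs.2, h4c, hin.2, hρpos]
      -- end hfacts
    have H1 : ∀ p, v p ∈ Icc (0:ℝ) 1 := fun p => (hfacts p).1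
    have H2 : ∀ p, |v p - u p| ≤ |r| * (|α (margVec p (u p))| + 2 * σ) := fun p => (hfacts p).2.1
    have H3 : ∀ p, u p ∈ Icc ρ (1-ρ) → |v p - (u p - r * α (margVec p (u p)))| ≤ 2 * |r| * σ :=
      fun p => (hfacts p).2.2
    have H2' : ∀ p, |v p - u p| ≤ 4 * |r| * K := by
      intro p
      have h1 := H2 p
      have h2 := hKα _ (margVec_mem_cube p (hu' p))
      have h3 : |α (margVec p (u p))| + 2 * σ ≤ 4 * K := by linarith [hσ1, hK1]
      have h4 : |r| * (|α (margVec p (u p))| + 2 * σ) ≤ |r| * (4*K) :=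
        mul_le_mul_of_nonneg_left h3 (abs_nonneg r)
      have h5 : |r| * (4*K) = 4 * |r| * K := by ring
      linarith
    have hvc : v ∈ cube d := mem_cube.2 H1
    have hdistvu : dist v u ≤ 4 * |r| * K := by
      rw [dist_pi_le_iff (by positivity)]
      intro p
      rw [Real.dist_eq]
      exact H2' p
    -- third term
    have hthird : |αn n v - α u| ≤ 2 * σ := by
      have h1 := (hn1 v hvc).le
      rw [Real.dist_eq] at h1
      have h2 : |α v - α u| ≤ σ := hη₁ v hvc u hu (le_trans hdistvu h4a)
      calc |αn n v - α u| = |(-(α v - αn n v)) + (α v - α u)| := by ring_nf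
        _ ≤ |(-(α v - αn n v))| + |α v - α u| := abs_add_le _ _
        _ = |α v - αn n v| + |α v - α u| := by rw [abs_neg]
        _ ≤ σ + σ := add_le_add h1 h2
        _ = 2 * σ := by ring
    -- telescoping
    set f : ℕ → ℝ := fun j => C (fun p => if (p:ℕ) < j then v p else u p) with hfdef
    set g : ℕ → ℝ := fun j => if h : j < d then
        D ⟨j,h⟩ u * α (margVec ⟨j,h⟩ (u ⟨j,h⟩)) else 0 with hgdef
    have hf0 : f 0 = C u := by
      have h : (fun p : Fin d => if (p:ℕ) < 0 then v p else u p) = u := by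
        funext p; simp
      simp only [hfdef, h]
    have hfd : f d = C v := by
      have h : (fun p : Fin d => if (p:ℕ) < d then v p else u p) = v := by
        funext p; simp [p.isLt]
      simp only [hfdef, h]
    have htel : C v - C u = ∑ i ∈ Finset.range d, (f (i+1) - f i) := by
      rw [Finset.sum_range_sub f d, hf0, hfd]
    have hgsum : (∑ p : Fin d, D p u * α (margVec p (u p))) = ∑ i ∈ Finset.range d, g i := by
      rw [← Fin.sum_univ_eq_sum_range]
      apply Finset.sum_congr rfl
      intro p _
      simp only [hgdef, p.isLt, dif_pos, Fin.eta]
    -- algebra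
    have hsum : (C v - C u)/r + (∑ p : Fin d, D p u * α (margVec p (u p)))
        = ∑ i ∈ Finset.range d, ((f (i+1) - f i)/r + g i) := by
      rw [htel, hgsum, Finset.sum_div, ← Finset.sum_add_distrib]
    have hsplit : ((C v + t n * αn n v) - C u) / t n
        - (α u - ∑ p : Fin d, D p u * α (margVec p (u p)))
        = (∑ i ∈ Finset.range d, ((f (i+1) - f i)/r + g i)) + (αn n v - α u) := by
      rw [← hsum, ← hrdef]
      rw [show (C v + r * αn n v) - C u = (C v - C u) + r * αn n v by ring,
        add_div, mul_div_cancel_left₀ _ hr]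
      ring
    -- per-coordinate bracket bound
    have hbr : ∀ i ∈ Finset.range d, |(f (i+1) - f i)/r + g i| ≤ (K+5)*σ := by
      intro i hi
      have hid : i < d := Finset.mem_range.1 hi
      set k : Fin d := ⟨i, hid⟩ with hkdef
      set w : Fin d → ℝ := fun p => if (p:ℕ) < i then v p else u p with hwdef
      have hwc : w ∈ cube d := by
        rw [mem_cube]
        intro p
        simp only [hwdef]
        by_cases h : (p:ℕ) < i
        · rw [if_pos h]; exact H1 p
        · rw [if_neg h]; exact hu' p
      have hwk : w k = u k := by
        simp only [hwdef]
        rw [if_neg (by simp [hkdef])]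
      have hv0 : (fun p : Fin d => if (p:ℕ) < i then v p else u p)
          = Function.update w k (u k) := by
        rw [← hwk, Function.update_eq_self]
      have hv1 : (fun p : Fin d => if (p:ℕ) < i+1 then v p else u p)
          = Function.update w k (v k) := by
        funext p
        by_cases h : p = k
        · subst h
          rw [Function.update_self, if_pos (by simp [hkdef])]
        · rw [Function.update_of_ne h]
          have hpk : (p:ℕ) ≠ i := by
            intro hc
            exact h (Fin.ext (by simp [hkdef, hc]))
          simp only [hwdef]
          by_cases h2 : (p:ℕ) < i
          · rw [if_pos h2, if_pos (Nat.lt_succ_of_lt h2)]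
          · rw [if_neg h2, if_neg (by omega)]
      have hfi1 : f (i+1) = C (Function.update w k (v k)) := by
        simp only [hfdef]; rw [hv1]
      have hfi0 : f i = C (Function.update w k (u k)) := by
        simp only [hfdef]; rw [hv0]
      have hgi : g i = D k u * α (margVec k (u k)) := by
        simp only [hgdef]; rw [dif_pos hid]
      have hak1 : v k ∈ Icc (0:ℝ) 1 := H1 k
      have hq1 : u k ∈ Icc (0:ℝ) 1 := hu' k
      have habs : |v k - u k| ≤ |r| * (|α (margVec k (u k))| + 2*σ) := H2 k
      have habs4 : |v k - u k| ≤ 4 * |r| * K := H2' k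
      have hγK1 : |α (margVec k (u k))| ≤ K - 1 := hKα _ (margVec_mem_cube k hq1)
      rw [hfi1, hfi0, hgi]
      by_cases hqin : ρ ≤ u k ∧ u k ≤ 1 - ρ
      · -- interior case
        have hqIoo : u k ∈ Ioo (0:ℝ) 1 :=
          ⟨lt_of_lt_of_le hρpos hqin.1, lt_of_le_of_lt hqin.2 (by linarith)⟩
        have href : |v k - (u k - r * α (margVec k (u k)))| ≤ 2 * |r| * σ := H3 k ⟨hqin.1, hqin.2⟩
        have hDmem : D k u ∈ Icc (0:ℝ) 1 := D_mem_Icc hμm hCd hu hqIoo (hDderiv k u hu hqIoo)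
        have hquot : |(v k - u k)/r + α (margVec k (u k))| ≤ 2*σ := by
          have h1 : (v k - u k)/r + α (margVec k (u k))
              = (v k - (u k - r * α (margVec k (u k))))/r := by
            field_simp
            ring
          rw [h1, abs_div, div_le_iff₀ hrpos]
          calc |v k - (u k - r * α (margVec k (u k)))| ≤ 2 * |r| * σ := href
            _ = 2 * σ * |r| := by ring
        have habs4' := abs_le.1 habs4
        have hakIoo : v k ∈ Ioo (0:ℝ) 1 := by
          constructor
          · linarith [h4c, hqin.1, habs4'.1]
          · linarith [h4c, hqin.2, habs4'.2]
        have hmvtall : ∃ ξ, ξ ∈ Icc (0:ℝ) 1 ∧ ξ ∈ Icc (ρ/2) (1 - ρ/2) ∧ |ξ - u k| ≤ 4 * |r| * K ∧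
            C (Function.update w k (v k)) - C (Function.update w k (u k))
              = D k (Function.update w k ξ) * (v k - u k) := by
          rcases lt_trichotomy (v k) (u k) with hlt | heqq | hgt
          · obtain ⟨ξ, hξ, hmvt⟩ := mvt_coord hμm hCd k (D k) (hDderiv k) hwc hakIoo hqIoo hlt
            refine ⟨ξ, ⟨le_trans hak1.1 hξ.1.le, le_trans hξ.2.le hq1.2⟩,
              ⟨by linarith [hξ.1, habs4'.1, h4c, hqin.1], by linarith [hξ.2, hqin.2, hρpos]⟩,
              abs_le.2 ⟨by linarith [hξ.1, habs4'.1], by linarith [hξ.2, hrK0]⟩,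
              by linear_combination -hmvt⟩
          · exact ⟨u k, hq1, ⟨by linarith [hqin.1, hρpos], by linarith [hqin.2, hρpos]⟩,
              by rw [sub_self, abs_zero]; positivity,
              by rw [heqq]; ring⟩
          · obtain ⟨ξ, hξ, hmvt⟩ := mvt_coord hμm hCd k (D k) (hDderiv k) hwc hqIoo hakIoo hgt
            refine ⟨ξ, ⟨le_trans hq1.1 hξ.1.le, le_trans hξ.2.le hak1.2⟩,
              ⟨by linarith [hξ.1, hqin.1, hρpos], by linarith [hξ.2, habs4'.2, h4c, hqin.2]⟩,
              abs_le.2 ⟨by linarith [hξ.1, hrK0], by linarith [hξ.2, habs4'.2]⟩,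
              hmvt⟩
        obtain ⟨ξ, hξ01, hξslab, hξdist, hCdiff⟩ := hmvtall
        have hDclose : |D k (Function.update w k ξ) - D k u| ≤ σ := by
          apply hη₂ k
          · refine ⟨update_mem_cube hwc k hξ01, ?_⟩
            show (Function.update w k ξ) k ∈ Icc (ρ/2) (1-ρ/2)
            rw [Function.update_self]
            exact hξslab
          · exact ⟨hu, ⟨by linarith [hqin.1, hρpos], by linarith [hqin.2, hρpos]⟩⟩
          · refine le_trans ?_ h4b
            rw [dist_pi_le_iff (by positivity)]
            intro p
            rw [Real.dist_eq]
            by_cases hp : p = k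
            · subst hp
              rw [Function.update_self]
              exact hξdist
            · rw [Function.update_of_ne hp]
              simp only [hwdef]
              by_cases h2 : (p:ℕ) < i
              · rw [if_pos h2]; exact H2' p
              · rw [if_neg h2, sub_self, abs_zero]; positivity
        rw [hCdiff]
        have hfrac : |(v k - u k)/r| ≤ K + 1 := by
          rw [abs_div, div_le_iff₀ hrpos]
          calc |v k - u k| ≤ |r| * (|α (margVec k (u k))| + 2*σ) := habs
            _ ≤ |r| * (K+1) := mul_le_mul_of_nonneg_left (by linarith) (abs_nonneg r)
            _ = (K+1) * |r| := by ring
        have hDku : |D k u| ≤ 1 := by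
          rw [abs_of_nonneg hDmem.1]; exact hDmem.2
        have hEq2 : D k (Function.update w k ξ) * (v k - u k) / r + D k u * α (margVec k (u k))
            = (D k (Function.update w k ξ) - D k u) * ((v k - u k)/r)
              + D k u * ((v k - u k)/r + α (margVec k (u k))) := by
          ring
        rw [hEq2]
        calc |(D k (Function.update w k ξ) - D k u) * ((v k - u k)/r)
              + D k u * ((v k - u k)/r + α (margVec k (u k)))|
            ≤ |(D k (Function.update w k ξ) - D k u) * ((v k - u k)/r)|
              + |D k u * ((v k - u k)/r + α (margVec k (u k)))| := abs_add_le _ _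
          _ = |D k (Function.update w k ξ) - D k u| * |(v k - u k)/r|
              + |D k u| * |(v k - u k)/r + α (margVec k (u k))| := by rw [abs_mul, abs_mul]
          _ ≤ σ * (K+1) + 1 * (2*σ) := by
              apply add_le_add
              · exact mul_le_mul hDclose hfrac (abs_nonneg _) hσpos.le
              · exact mul_le_mul hDku hquot (abs_nonneg _) zero_le_one
          _ ≤ (K+5)*σ := by
              have e1 : σ * (K+1) + 1 * (2*σ) = (K+3)*σ := by ring
              have e2 : (K+3)*σ ≤ (K+5)*σ :=
                mul_le_mul_of_nonneg_right (by linarith only []) hσpos.le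
              linarith only [e1, e2]
      · -- boundary case
        have hcase : u k < ρ ∨ 1 - ρ < u k := by
          by_cases h : ρ ≤ u k
          · right
            by_contra h2
            push_neg at h2
            exact hqin ⟨h, h2⟩
          · exact Or.inl (lt_of_not_ge h)
        have hγsmall : |α (margVec k (u k))| ≤ σ := by
          rcases hcase with h | h
          · have h0 : α (margVec k 0) = 0 := hα0 _ ⟨k, by simp [margVec]⟩
            have hd := hη₁ (margVec k (u k)) (margVec_mem_cube k hq1) (margVec k 0)
              (margVec_mem_cube k ⟨le_refl 0, zero_le_one⟩)
              (le_trans (dist_margVec k (u k) 0)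
                (by rw [sub_zero, abs_of_nonneg hq1.1]; linarith [hρη]))
            rwa [h0, sub_zero] at hd
          · have h1 : α (margVec k 1) = 0 := by rw [margVec_one]; exact hα1
            have hd := hη₁ (margVec k (u k)) (margVec_mem_cube k hq1) (margVec k 1)
              (margVec_mem_cube k ⟨zero_le_one, le_refl 1⟩)
              (le_trans (dist_margVec k (u k) 1)
                (by rw [abs_of_nonpos (by linarith [hq1.2])]; linarith [hρη]))
            rwa [h1, sub_zero] at hd
        have hDku : |D k u| ≤ 1 := by
          rcases eq_or_lt_of_le hq1.1 with h0 | h0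
          · rw [hDbdry k u (Or.inl h0.symm), abs_zero]
            exact zero_le_one
          · rcases eq_or_lt_of_le hq1.2 with h1 | h1
            · rw [hDbdry k u (Or.inr h1), abs_zero]
              exact zero_le_one
            · have hDmem := D_mem_Icc hμm hCd hu ⟨h0, h1⟩ (hDderiv k u hu ⟨h0, h1⟩)
              rw [abs_of_nonneg hDmem.1]; exact hDmem.2
        have hlip : |C (Function.update w k (v k)) - C (Function.update w k (u k))|
            ≤ |v k - u k| := by
          rcases le_total (v k) (u k) with h | h
          · have hl := C_lip_coord hμm hCd w k hak1.1 h hq1.2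
            rw [abs_sub_comm (C (Function.update w k (v k))),
              abs_of_nonneg (by linarith [hl.1]), abs_sub_comm (v k),
              abs_of_nonneg (by linarith)]
            linarith [hl.2]
          · have hl := C_lip_coord hμm hCd w k hq1.1 h hak1.2
            rw [abs_of_nonneg (by linarith [hl.1]), abs_of_nonneg (by linarith)]
            linarith [hl.2]
        have hfrac2 : |v k - u k|/|r| ≤ |α (margVec k (u k))| + 2*σ := by
          rw [div_le_iff₀ hrpos]
          calc |v k - u k| ≤ |r| * (|α (margVec k (u k))| + 2*σ) := habs
            _ = (|α (margVec k (u k))| + 2*σ) * |r| := by ring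
        calc |(C (Function.update w k (v k)) - C (Function.update w k (u k)))/r
              + D k u * α (margVec k (u k))|
            ≤ |(C (Function.update w k (v k)) - C (Function.update w k (u k)))/r|
              + |D k u * α (margVec k (u k))| := abs_add_le _ _
          _ = |C (Function.update w k (v k)) - C (Function.update w k (u k))|/|r|
              + |D k u| * |α (margVec k (u k))| := by rw [abs_div, abs_mul]
          _ ≤ |v k - u k|/|r| + 1 * σ := by
              apply add_le_add
              · exact (div_le_div_iff_of_pos_right hrpos).2 hlip
              · exact mul_le_mul hDku hγsmall (abs_nonneg _) zero_le_one
          _ ≤ (|α (margVec k (u k))| + 2*σ) + σ := by linarith [hfrac2]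
          _ ≤ 4*σ := by linarith only [hγsmall, hfrac2]
          _ ≤ (K+5)*σ := by
              have e2 : (4:ℝ) ≤ K+5 := by linarith only [hK1]
              exact mul_le_mul_of_nonneg_right e2 hσpos.le
    -- assemble
    rw [hsplit]
    calc |(∑ i ∈ Finset.range d, ((f (i+1) - f i)/r + g i)) + (αn n v - α u)|
        ≤ |∑ i ∈ Finset.range d, ((f (i+1) - f i)/r + g i)| + |αn n v - α u| := abs_add_le _ _
      _ ≤ (∑ i ∈ Finset.range d, |(f (i+1) - f i)/r + g i|) + 2*σ :=
          add_le_add (Finset.abs_sum_le_sum_abs _ _) hthird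
      _ ≤ (∑ _i ∈ Finset.range d, (K+5)*σ) + 2*σ :=
          add_le_add_left (Finset.sum_le_sum hbr) _
      _ = (d:ℝ) * ((K+5)*σ) + 2*σ := by
          rw [Finset.sum_const, Finset.card_range, nsmul_eq_mul]
      _ ≤ ((d:ℝ)+1) * (K+5) * σ := by
          have h2 : 2*σ ≤ (K+5)*σ :=
            mul_le_mul_of_nonneg_right (by linarith only [hK1]) hσpos.le
          have e : ((d:ℝ)+1) * (K+5) * σ = (d:ℝ) * ((K+5)*σ) + (K+5)*σ := by ring
          linarith only [h2, e]
      _ ≤ ε/2 := hσε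
  have hnn : 0 ≤ ⨆ uu : ↥(cube d),
      |((C (fun p => Finv n p (uu.1 p)) + t n * αn n (fun p => Finv n p (uu.1 p))) - C uu.1) / t n
        - (α uu.1 - ∑ p, D p uu.1 * α (margVec p (uu.1 p)))| :=
    Real.iSup_nonneg fun uu => abs_nonneg _
  have hle := ciSup_le hmain
  rw [Real.norm_eq_abs, abs_of_nonneg hnn]
  exact lt_of_le_of_lt hle (by linarith)
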